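/- Let π be a B-avoiding permutation of {1,...,n} whose last value is 2, and let π'' be the permutation of {1,...,n-1} obtained from π by deleting the value 1, moving the value 2 to the position previously occupied by 1, and decreasing every value by 1. Then π'' is B-avoiding, and applying to π'' the map that increases all values by 1, replaces the value 2 by 1, and appends 2 at the end recovers π. -/

import Mathlib

/-- `l` is a permutation of `{1, ..., n}`, viewed as the sequence of its values. -/
def IsPermOf (l : List ℕ) (n : ℕ) : Prop := l.Perm (List.range' 1 n)

/-- `l` is B-avoiding: there are no indices `a < b < c < d` with
`max {l a, l c} < min {l b, l d}`. -/
def BAvoid (l : List ℕ) : Prop :=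
  ∀ a b c d : Fin l.length, a < b → b < c → c < d →
    ¬ (max (l.get a) (l.get c) < min (l.get b) (l.get d))

/-- increase all values by 1 and insert `1` immediately before the value `2`. -/
def fBefore (σ : List ℕ) : List ℕ :=
  ((σ.map (· + 1)).take ((σ.map (· + 1)).idxOf 2)) ++
    1 :: ((σ.map (· + 1)).drop ((σ.map (· + 1)).idxOf 2))

/-- increase all values by 1 and insert `1` immediately after the value `2`. -/
def fAfter (σ : List ℕ) : List ℕ :=
  ((σ.map (· + 1)).take ((σ.map (· + 1)).idxOf 2 + 1)) ++
    1 :: ((σ.map (· + 1)).drop ((σ.map (· + 1)).idxOf 2 + 1))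

/-- increase all values by 1 and append `1` at the end. -/
def fEnd (σ : List ℕ) : List ℕ := σ.map (· + 1) ++ [1]

/-- increase all values by 1, replace the value `2` by `1`, and append `2` at the end. -/
def fBump (σ : List ℕ) : List ℕ :=
  (σ.map (· + 1)).map (fun x => if x = 2 then 1 else x) ++ [2]

lemma map_sub_one_range' (s k : ℕ) :
    (List.range' (s+1) k).map (· - 1) = List.range' s k := by
  induction k generalizing s with
  | zero => simp
  | succ k ih => rw [List.range'_succ, List.range'_succ, List.map_cons, ih]; simp

theorem stmt8 (n : ℕ) (hn : 2 ≤ n) (π : List ℕ)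
    (hπ : IsPermOf π n) (hB : BAvoid π)
    (hlast : π.getLast? = some 2) :
    IsPermOf ((π.dropLast.map (fun x => if x = 1 then 2 else x)).map (· - 1)) (n - 1) ∧
    BAvoid ((π.dropLast.map (fun x => if x = 1 then 2 else x)).map (· - 1)) ∧
    fBump ((π.dropLast.map (fun x => if x = 1 then 2 else x)).map (· - 1)) = π := by
  obtain ⟨m, rfl⟩ : ∃ m, n = m + 2 := ⟨n - 2, by omega⟩
  set L := π.dropLast with hL
  set P := (L.map (fun x => if x = 1 then 2 else x)).map (· - 1) with hP
  have hne : π ≠ [] := by intro h; simp [h] at hlast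
  have hπeq : π = L ++ [2] := by
    have h1 := List.dropLast_append_getLast hne
    have h2 : π.getLast hne = 2 := by
      have := List.getLast?_eq_getLast hne
      rw [this] at hlast; exact Option.some_injective _ hlast
    rw [h2] at h1; exact h1.symm
  have hmemπ : ∀ x ∈ π, 1 ≤ x ∧ x ≤ m + 2 := by
    intro x hx
    have := hπ.mem_iff.mp hx
    rw [List.mem_range'] at this
    omega
  have hnd : π.Nodup := hπ.nodup_iff.mpr (List.nodup_range' (s := 1) (n := m + 2))
  have h2L : 2 ∉ L := by
    rw [hπeq] at hnd
    have := List.disjoint_of_nodup_append hnd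
    intro h; exact this h (by simp)
  have hmemL : ∀ x ∈ L, 1 ≤ x ∧ x ≤ m + 2 ∧ x ≠ 2 := by
    intro x hx
    have hx' : x ∈ π := by rw [hπeq]; exact List.mem_append_left _ hx
    exact ⟨(hmemπ x hx').1, (hmemπ x hx').2, fun h => h2L (h ▸ hx)⟩
  -- range' decomposition
  have hr : List.range' 1 (m + 2) = 1 :: 2 :: List.range' 3 m := by
    rw [show m + 2 = (m + 1) + 1 from rfl, List.range'_succ, List.range'_succ]
  -- Part 1: permutation
  have hLperm : L.Perm (1 :: List.range' 3 m) := by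
    have h1 : (2 :: L).Perm (L ++ [2]) := List.perm_cons_append_cons 2 (by simp)
    have h2 : (2 :: L).Perm (1 :: 2 :: List.range' 3 m) := by
      refine h1.trans ?_
      rw [← hπeq, ← hr]; exact hπ
    have h3 : (2 :: L).Perm (2 :: 1 :: List.range' 3 m) :=
      h2.trans (List.Perm.swap 2 1 _)
    exact (List.perm_cons 2).mp h3
  have hPperm : IsPermOf P (m + 2 - 1) := by
    show P.Perm _
    have step1 : P.Perm (((1 :: List.range' 3 m).map
        (fun x => if x = 1 then 2 else x)).map (· - 1)) :=
      (hLperm.map _).map _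
    have e1 : ((1 :: List.range' 3 m).map (fun x => if x = 1 then 2 else x)) =
        2 :: List.range' 3 m := by
      rw [List.map_cons]
      simp only [if_pos rfl]
      congr 1
      refine (List.map_congr_left ?_).trans (List.map_id _)
      intro x hx
      rw [List.mem_range'] at hx
      simp only [id]
      rw [if_neg (by omega)]
    have e2 : ((2 :: List.range' 3 m).map (· - 1)) = 1 :: List.range' 2 m := by
      rw [List.map_cons]
      congr 1
      exact map_sub_one_range' 2 m
    rw [e1, e2] at step1
    have : List.range' 1 (m + 2 - 1) = 1 :: List.range' 2 m := by
      rw [show m + 2 - 1 = m + 1 from rfl, List.range'_succ]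
    rw [this]
    exact step1
  refine ⟨hPperm, ?_, ?_⟩
  -- Part 2: B-avoiding
  · have hπlen : π.length = L.length + 1 := by rw [hπeq]; simp
    have hPlen : P.length = L.length := by simp [hP]
    have key : ∀ (i : ℕ) (h : i < L.length),
        P[i]'(by omega) = max 1 (π[i]'(by omega) - 1) ∧ 1 ≤ π[i]'(by omega) := by
      intro i h
      have hπi : π[i]'(by omega) = L[i] :=
        (List.getElem_of_eq hπeq (by omega)).trans (List.getElem_append_left h)
      have hPi : P[i]'(by omega) = (if L[i] = 1 then 2 else L[i]) - 1 := by
        simp [hP]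
      have hmem : 1 ≤ L[i] ∧ L[i] ≤ m + 2 ∧ L[i] ≠ 2 :=
        hmemL _ (List.getElem_mem h)
      constructor
      · rw [hPi, hπi]
        by_cases h1 : L[i] = 1
        · rw [if_pos h1, h1]; omega
        · rw [if_neg h1]; omega
      · rw [hπi]; exact hmem.1
    intro a b c d hab hbc hcd habs
    have ha : a.1 < L.length := by have := a.2; omega
    have hb : b.1 < L.length := by have := b.2; omega
    have hc : c.1 < L.length := by have := c.2; omega
    have hd : d.1 < L.length := by have := d.2; omega
    refine hB ⟨a.1, by omega⟩ ⟨b.1, by omega⟩ ⟨c.1, by omega⟩ ⟨d.1, by omega⟩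
      hab hbc hcd ?_
    simp only [List.get_eq_getElem] at habs ⊢
    obtain ⟨ka, ka'⟩ := key a.1 ha
    obtain ⟨kb, kb'⟩ := key b.1 hb
    obtain ⟨kc, kc'⟩ := key c.1 hc
    obtain ⟨kd, kd'⟩ := key d.1 hd
    rw [ka, kb, kc, kd] at habs
    omega
  -- Part 3: fBump
  · unfold fBump
    have e1 : P.map (· + 1) = L.map (fun x => if x = 1 then 2 else x) := by
      rw [hP, List.map_map, List.map_map]
      refine List.map_congr_left ?_
      intro x hx
      obtain ⟨h1, h2, h3⟩ := hmemL x hx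
      simp only [Function.comp]
      by_cases hx1 : x = 1
      · simp [hx1]
      · rw [if_neg hx1]; omega
    rw [e1]
    have e2 : (L.map (fun x => if x = 1 then 2 else x)).map
        (fun x => if x = 2 then 1 else x) = L := by
      rw [List.map_map]
      refine (List.map_congr_left ?_).trans (List.map_id _)
      intro x hx
      obtain ⟨h1, h2, h3⟩ := hmemL x hx
      simp only [Function.comp, id]
      by_cases hx1 : x = 1
      · simp [hx1]
      · rw [if_neg hx1, if_neg h3]
    rw [e2, ← hπeq]
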